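/- Let d ≥ 1 and let a_1, …, a_d and c_1, …, c_d be positive real numbers such that cos(a_j) ≠ 0 for every j, and such that for every t ∈ (0,1] at most one index j satisfies cos(a_j·t) = 0. Define F(t) := Σ_{j=1}^d c_j·tan(a_j·t) wherever all cos(a_j·t) ≠ 0, let Z := { t ∈ (0,1] : (∀ j, cos(a_j·t) ≠ 0) and F(t) = 0 }, and let P := Σ_{j=1}^d |{ m ∈ ℕ : (2m+1)·π/2 < a_j }| (the number of poles of F in (0,1)). Then Z is finite and |Z| + 1 = P + χ, where χ = 1 if F(1) ≥ 0 and χ = 0 if F(1) < 0. -/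

import Mathlib

open Real Filter Set Topology


lemma tan_atTop_left (k : ℤ) : Tendsto tan (𝓝[<] ((2*(k:ℝ)+1)*π/2)) atTop := by
  have hper : ∀ x : ℝ, tan (x - (k:ℝ) * π) = tan x := fun x => Real.tan_periodic.sub_int_mul_eq k
  have hmap : Tendsto (fun x : ℝ => x - (k:ℝ)*π) (𝓝[<] ((2*(k:ℝ)+1)*π/2)) (𝓝[<] (π/2)) := by
    rw [tendsto_nhdsWithin_iff]
    constructor
    · have : (2*(k:ℝ)+1)*π/2 - (k:ℝ)*π = π/2 := by ring
      have hc := (continuous_sub_right ((k:ℝ)*π)).tendsto ((2*(k:ℝ)+1)*π/2)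
      rw [this] at hc
      exact hc.mono_left nhdsWithin_le_nhds
    · filter_upwards [self_mem_nhdsWithin] with x hx
      simp only [Set.mem_Iio] at hx ⊢
      linarith
  have := tendsto_tan_pi_div_two.comp hmap
  refine this.congr fun x => hper x

lemma tan_atBot_right (k : ℤ) : Tendsto tan (𝓝[>] ((2*(k:ℝ)+1)*π/2)) atBot := by
  have hper : ∀ x : ℝ, tan (x - ((k:ℤ)+1 : ℤ) * π) = tan x := fun x =>
    Real.tan_periodic.sub_int_mul_eq (k+1)
  have hmap : Tendsto (fun x : ℝ => x - ((k:ℝ)+1)*π) (𝓝[>] ((2*(k:ℝ)+1)*π/2)) (𝓝[>] (-(π/2))) := by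
    rw [tendsto_nhdsWithin_iff]
    constructor
    · have : (2*(k:ℝ)+1)*π/2 - ((k:ℝ)+1)*π = -(π/2) := by ring
      have hc := (continuous_sub_right (((k:ℝ)+1)*π)).tendsto ((2*(k:ℝ)+1)*π/2)
      rw [this] at hc
      exact hc.mono_left nhdsWithin_le_nhds
    · filter_upwards [self_mem_nhdsWithin] with x hx
      simp only [Set.mem_Ioi] at hx ⊢
      linarith
  have := tendsto_tan_neg_pi_div_two.comp hmap
  refine this.congr fun x => by simpa using hper x


lemma key_count : ∀ (n : ℕ) (F : ℝ → ℝ) (x y : ℝ) (Q : Set ℝ), x < y → Q.Finite → Q.ncard = n →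
    Q ⊆ Set.Ioo x y →
    (∀ s t, x < s → s < t → t ≤ y → (∀ u ∈ Set.Icc s t, u ∉ Q) → F s < F t) →
    (∀ t ∈ Set.Ioc x y, t ∉ Q → ContinuousAt F t) →
    (∀ q ∈ Q, ∀ᶠ t in 𝓝[>] q, F t < 0) →
    (∀ q ∈ Q, ∀ᶠ t in 𝓝[<] q, 0 < F t) →
    (∀ᶠ t in 𝓝[>] x, 0 < F t) →
    {t ∈ Set.Ioc x y | t ∉ Q ∧ F t = 0}.Finite ∧
      {t ∈ Set.Ioc x y | t ∉ Q ∧ F t = 0}.ncard + 1 = n + (if 0 ≤ F y then 1 else 0) := by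
  intro n
  induction n with
  | zero =>
    intro F x y Q hxy hQfin hQn hQsub hmono hcont hright hleft hx
    have hQempty : Q = ∅ := (Set.ncard_eq_zero hQfin).mp hQn
    subst hQempty
    obtain ⟨u, hu, hupos⟩ := mem_nhdsGT_iff_exists_Ioo_subset.mp hx
    have hpos : ∀ t ∈ Set.Ioc x y, 0 < F t := by
      intro t ht
      set s := min ((x+t)/2) ((x+u)/2) with hs
      have hxs : x < s := by
        apply lt_min <;> [linarith [ht.1]; linarith [mem_Ioi.mp hu]]
      have hst : s < t := by
        have : s ≤ (x+t)/2 := min_le_left _ _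
        linarith [ht.1]
      have hsu : s < u := by
        have : s ≤ (x+u)/2 := min_le_right _ _
        linarith [mem_Ioi.mp hu]
      have hFs : 0 < F s := hupos ⟨hxs, hsu⟩
      have : F s < F t := hmono s t hxs hst ht.2 (fun v _ hv => hv)
      linarith
    have hZ : {t ∈ Set.Ioc x y | t ∉ (∅ : Set ℝ) ∧ F t = 0} = ∅ := by
      refine Set.eq_empty_iff_forall_notMem.mpr ?_
      rintro t ⟨ht, -, hFt⟩
      exact absurd hFt (ne_of_gt (hpos t ht))
    have hFy : 0 ≤ F y := le_of_lt (hpos y ⟨hxy, le_refl _⟩)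
    rw [hZ]
    simp [hFy]
  | succ n ih =>
    intro F x y Q hxy hQfin hQn hQsub hmono hcont hright hleft hx
    classical
    have hQne : Q.Nonempty := by
      rw [← Set.ncard_pos hQfin]; omega
    have hQfne : hQfin.toFinset.Nonempty := by
      simpa [Set.Finite.toFinset_nonempty] using hQne
    set q := hQfin.toFinset.max' hQfne with hq
    have hqQ : q ∈ Q := by
      have := hQfin.toFinset.max'_mem hQfne
      rwa [Set.Finite.mem_toFinset] at this
    have hqmax : ∀ r ∈ Q, r ≤ q := by
      intro r hr
      exact hQfin.toFinset.le_max' r (hQfin.mem_toFinset.mpr hr)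
    have hxq : x < q := (hQsub hqQ).1
    have hqy : q < y := (hQsub hqQ).2
    -- left neighborhood of q where F > 0
    obtain ⟨l, hl, hlpos⟩ := mem_nhdsLT_iff_exists_Ioo_subset.mp (hleft q hqQ)
    set Q' := Q \ {q} with hQ'
    have hQ'fin : Q'.Finite := hQfin.diff
    have hQ'n : Q'.ncard = n := by
      rw [hQ', Set.ncard_diff_singleton_of_mem hqQ, hQn]
      omega
    -- pick y' in (max(l,x,Q'), q)
    have hQ'lt : ∀ r ∈ Q', r < q := fun r hr =>
      lt_of_le_of_ne (hqmax r hr.1) (by simpa using hr.2)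
    set Bf : Finset ℝ := insert l (insert x hQ'fin.toFinset) with hBf
    have hBne : Bf.Nonempty := ⟨l, by simp [hBf]⟩
    set b := Bf.max' hBne with hb
    have hbq : b < q := by
      rw [hb, Finset.max'_lt_iff]
      intro r hr
      simp only [hBf, Finset.mem_insert, Set.Finite.mem_toFinset] at hr
      rcases hr with rfl | rfl | hr
      · exact mem_Iio.mp hl
      · exact hxq
      · exact hQ'lt r hr
    set y' := (b + q)/2 with hy'
    have hby' : b < y' := by rw [hy']; linarith
    have hy'q : y' < q := by rw [hy']; linarith
    have hxb : x ≤ b := Bf.le_max' x (by simp [hBf])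
    have hlb : l ≤ b := Bf.le_max' l (by simp [hBf])
    have hxy' : x < y' := lt_of_le_of_lt hxb hby'
    have hQ'sub : Q' ⊆ Set.Ioo x y' := by
      intro r hr
      exact ⟨(hQsub hr.1).1, lt_of_le_of_lt (Bf.le_max' r (by simp [hBf, hr])) hby'⟩
    have hnotq : ∀ t, t ≤ y' → (t ∉ Q' ↔ t ∉ Q) := by
      intro t ht
      constructor
      · intro h htQ
        exact h ⟨htQ, by simp; rintro rfl; linarith⟩
      · intro h h'
        exact h h'.1
    have hy'pos : 0 < F y' := hlpos ⟨lt_of_le_of_lt hlb hby', hy'q⟩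
    -- apply induction hypothesis on (x, y'] with poles Q'
    obtain ⟨hZ1fin, hZ1card⟩ := ih F x y' Q' hxy' hQ'fin hQ'n hQ'sub
      (fun s t hs hst hty' hni => hmono s t hs hst (le_trans hty' (le_of_lt (lt_trans hy'q hqy)))
        (fun u hu => (hnotq u (le_trans hu.2 hty')).mp (hni u hu)))
      (fun t ht htn => hcont t ⟨ht.1, le_trans ht.2 (le_of_lt (lt_trans hy'q hqy))⟩
        ((hnotq t ht.2).mp htn))
      (fun r hr => hright r hr.1) (fun r hr => hleft r hr.1) hx
    rw [if_pos (le_of_lt hy'pos)] at hZ1card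
    set Z1 := {t ∈ Set.Ioc x y' | t ∉ Q' ∧ F t = 0} with hZ1
    have hZ1n : Z1.ncard = n := by omega
    -- zeros beyond q
    set Z2 := {t ∈ Set.Ioc q y | t ∉ Q ∧ F t = 0} with hZ2
    have hmono2 : ∀ s t, q < s → s < t → t ≤ y → F s < F t := by
      intro s t hs hst hty
      refine hmono s t (lt_trans hxq hs) hst hty ?_
      intro u hu huQ
      exact absurd (hqmax u huQ) (not_le.mpr (lt_of_lt_of_le hs hu.1))
    have hnotQ2 : ∀ t, q < t → t ∉ Q := fun t ht htQ =>
      absurd (hqmax t htQ) (not_le.mpr ht)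
    have hZ2card : Z2.Finite ∧ Z2.ncard = (if 0 ≤ F y then 1 else 0) := by
      rcases lt_or_ge (F y) 0 with hFy | hFy
      · have : Z2 = ∅ := by
          refine Set.eq_empty_iff_forall_notMem.mpr ?_
          rintro t ⟨ht, -, hFt⟩
          rcases lt_or_eq_of_le ht.2 with h | h
          · exact absurd hFt (ne_of_lt (lt_trans (hmono2 t y ht.1 h (le_refl _)) hFy))
          · subst h; exact absurd hFt (ne_of_lt hFy)
        rw [this, if_neg (not_le.mpr hFy)]
        exact ⟨Set.finite_empty, Set.ncard_empty _⟩
      · -- there is exactly one zero in (q, y]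
        have hz : ∃ z, Z2 = {z} := by
          rcases eq_or_lt_of_le hFy with h | h
          · refine ⟨y, ?_⟩
            ext t
            simp only [hZ2, Set.mem_setOf_eq, Set.mem_singleton_iff]
            constructor
            · rintro ⟨ht, -, hFt⟩
              rcases lt_or_eq_of_le ht.2 with h' | h'
              · have hlt := hmono2 t y ht.1 h' le_rfl
                rw [← h] at hlt
                exact absurd hFt (ne_of_lt hlt)
              · exact h'
            · rintro rfl
              exact ⟨⟨hqy, le_rfl⟩, hnotQ2 _ hqy, h.symm⟩
          · obtain ⟨r, hr, hrneg⟩ := mem_nhdsGT_iff_exists_Ioo_subset.mp (hright q hqQ)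
            set s := min ((q+r)/2) ((q+y)/2) with hs
            have hqs : q < s := by
              apply lt_min <;> [linarith [mem_Ioi.mp hr]; linarith]
            have hsr : s < r := by
              have : s ≤ (q+r)/2 := min_le_left _ _
              linarith [mem_Ioi.mp hr]
            have hsy : s < y := by
              have : s ≤ (q+y)/2 := min_le_right _ _
              linarith
            have hFs : F s < 0 := hrneg ⟨hqs, hsr⟩
            have hcont2 : ContinuousOn F (Set.Icc s y) := by
              intro u hu
              exact (hcont u ⟨lt_trans hxq (lt_of_lt_of_le hqs hu.1), hu.2⟩
                (hnotQ2 u (lt_of_lt_of_le hqs hu.1))).continuousWithinAt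
            have := intermediate_value_Ioo (le_of_lt hsy) hcont2
            obtain ⟨z, hz, hFz⟩ := this (show (0:ℝ) ∈ Set.Ioo (F s) (F y) from ⟨hFs, h⟩)
            refine ⟨z, ?_⟩
            ext t
            simp only [hZ2, Set.mem_setOf_eq, Set.mem_singleton_iff]
            constructor
            · rintro ⟨ht, -, hFt⟩
              rcases lt_trichotomy t z with h' | h' | h'
              · exact absurd (hmono2 t z ht.1 h' (le_of_lt hz.2)) (by rw [hFt, hFz]; simp)
              · exact h'
              · exact absurd (hmono2 z t (lt_trans hqs hz.1) h' ht.2)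
                  (by rw [hFt, hFz]; simp)
            · rintro rfl
              exact ⟨⟨lt_trans hqs hz.1, le_of_lt hz.2⟩, hnotQ2 _ (lt_trans hqs hz.1), hFz⟩
        obtain ⟨z, hzeq⟩ := hz
        rw [hzeq, if_pos hFy]
        exact ⟨Set.finite_singleton _, Set.ncard_singleton _⟩
      -- combine
    set Z := {t ∈ Set.Ioc x y | t ∉ Q ∧ F t = 0} with hZdef
    have hsplit : Z = Z1 ∪ Z2 := by
      ext t
      simp only [hZdef, hZ1, hZ2, Set.mem_setOf_eq, Set.mem_union]
      constructor
      · rintro ⟨ht, htQ, hFt⟩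
        rcases le_or_gt t y' with h | h
        · exact Or.inl ⟨⟨ht.1, h⟩, (hnotq t h).mpr htQ, hFt⟩
        · rcases lt_or_ge q t with h' | h'
          · exact Or.inr ⟨⟨h', ht.2⟩, htQ, hFt⟩
          · rcases lt_or_eq_of_le h' with h'' | h''
            · exact absurd hFt (ne_of_gt (hlpos ⟨lt_of_le_of_lt hlb (lt_of_le_of_lt hby'.le h), h''⟩))
            · exact absurd hqQ (h''.symm ▸ htQ)
      · rintro (⟨ht, htQ, hFt⟩ | ⟨ht, htQ, hFt⟩)
        · exact ⟨⟨ht.1, le_trans ht.2 (le_of_lt (lt_trans hy'q hqy))⟩,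
            (hnotq t ht.2).mp htQ, hFt⟩
        · exact ⟨⟨lt_trans hxq ht.1, ht.2⟩, htQ, hFt⟩
    have hdisj : Disjoint Z1 Z2 := by
      rw [Set.disjoint_left]
      rintro t ⟨ht, -⟩ ⟨ht', -⟩
      exact absurd (le_trans ht.2 (le_of_lt hy'q)) (not_le.mpr ht'.1)
    have hZfin : Z.Finite := by rw [hsplit]; exact hZ1fin.union hZ2card.1
    refine ⟨hZfin, ?_⟩
    rw [hsplit, Set.ncard_union_eq hdisj hZ1fin hZ2card.1, hZ1n, hZ2card.2]
    omega


lemma ncard_iUnion_disj {d : ℕ} (Q : Fin d → Set ℝ) (hfin : ∀ j, (Q j).Finite)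
    (hdisj : ∀ i j, i ≠ j → Disjoint (Q i) (Q j)) :
    (⋃ j, Q j).ncard = ∑ j, (Q j).ncard := by
  classical
  have hrep : (⋃ j, Q j) = ↑(Finset.univ.biUnion fun j => (hfin j).toFinset) := by
    ext t; simp [Set.Finite.mem_toFinset]
  rw [hrep, Set.ncard_coe_finset, Finset.card_biUnion]
  · exact Finset.sum_congr rfl fun j _ => (Set.ncard_eq_toFinset_card _ (hfin j)).symm
  · intro i _ j _ hij
    rw [Function.onFun, Finset.disjoint_left]
    intro t hti htj
    rw [Set.Finite.mem_toFinset] at hti htj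
    exact Set.disjoint_left.mp (hdisj i j hij) hti htj

lemma pole_count {d : ℕ} (a : Fin d → ℝ) (ha : ∀ j, 0 < a j)
    (hcos1 : ∀ j, Real.cos (a j) ≠ 0)
    (hone : ∀ t ∈ Set.Ioc (0 : ℝ) 1, {j : Fin d | Real.cos (a j * t) = 0}.Subsingleton) :
    ∃ hfin : {t ∈ Set.Ioo (0:ℝ) 1 | ∃ j, Real.cos (a j * t) = 0}.Finite,
      {t ∈ Set.Ioo (0:ℝ) 1 | ∃ j, Real.cos (a j * t) = 0}.ncard
        = ∑ j, Nat.card {m : ℕ | (2 * (m : ℝ) + 1) * Real.pi / 2 < a j} := by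
  classical
  set Qj : Fin d → Set ℝ := fun j => {t ∈ Set.Ioo (0:ℝ) 1 | Real.cos (a j * t) = 0} with hQj
  have hrep : ∀ j, Qj j = (fun m : ℕ => (2 * (m : ℝ) + 1) * π / (2 * a j)) ''
      {m : ℕ | (2 * (m : ℝ) + 1) * Real.pi / 2 < a j} := by
    intro j
    ext t
    simp only [hQj, Set.mem_setOf_eq, Set.mem_image]
    constructor
    · rintro ⟨⟨ht0, ht1⟩, hcos⟩
      obtain ⟨k, hk⟩ := Real.cos_eq_zero_iff.mp hcos
      have hkpos : 0 < 2 * (k:ℝ) + 1 := by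
        have h1 : 0 < a j * t := mul_pos (ha j) ht0
        rw [hk] at h1
        nlinarith [pi_pos]
      have hk0 : 0 ≤ k := by
        by_contra h
        push_neg at h
        have hk1 : k ≤ -1 := by omega
        have : (k:ℝ) ≤ -1 := by exact_mod_cast hk1
        linarith
      have hkc : ((k.toNat : ℕ) : ℝ) = (k : ℝ) := by
        have := Int.toNat_of_nonneg hk0
        exact_mod_cast congrArg (fun z : ℤ => (z : ℝ)) this
      refine ⟨k.toNat, ?_, ?_⟩
      · show (2 * ((k.toNat : ℕ) : ℝ) + 1) * π / 2 < a j
        rw [hkc, ← hk]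
        calc a j * t < a j * 1 := mul_lt_mul_of_pos_left ht1 (ha j)
        _ = a j := mul_one _
      · show (2 * ((k.toNat : ℕ) : ℝ) + 1) * π / (2 * a j) = t
        rw [hkc]
        have ht' : t = (2 * (k:ℝ) + 1) * π / 2 / a j := by
          rw [eq_div_iff (ha j).ne']
          linear_combination hk
        rw [ht', div_div]
    · rintro ⟨m, hm, rfl⟩
      have hma : (2 * (m:ℝ) + 1) * π / 2 < a j := hm
      have hpos : 0 < 2 * (m:ℝ) + 1 := by positivity
      have h2a : 0 < 2 * a j := by linarith [ha j]
      refine ⟨⟨div_pos (mul_pos hpos pi_pos) h2a, ?_⟩, ?_⟩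
      · rw [div_lt_one h2a]
        nlinarith [pi_pos]
      · have : a j * ((2 * (m:ℝ) + 1) * π / (2 * a j)) = (2 * (m:ℝ) + 1) * π / 2 := by
          field_simp [(ha j).ne']
        rw [this]
        exact Real.cos_eq_zero_iff.mpr ⟨(m : ℤ), by push_cast; ring⟩
  have hSfin : ∀ j, {m : ℕ | (2 * (m : ℝ) + 1) * Real.pi / 2 < a j}.Finite := by
    intro j
    apply Set.Finite.subset (Set.finite_Iio (Nat.ceil (a j)))
    intro m hm
    simp only [Set.mem_setOf_eq] at hm
    simp only [Set.mem_Iio]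
    have h1 : (m : ℝ) < a j := by nlinarith [pi_gt_three]
    exact Nat.lt_ceil.mpr h1
  have hinj : ∀ j, Function.Injective (fun m : ℕ => (2 * (m : ℝ) + 1) * π / (2 * a j)) := by
    intro j m m' h
    simp only at h
    have haj := (ha j).ne'
    have hπ := pi_ne_zero
    field_simp at h
    have hmm : (m:ℝ) = m' := by linarith
    exact_mod_cast hmm
  have hQjfin : ∀ j, (Qj j).Finite := fun j => (hrep j) ▸ ((hSfin j).image _)
  have hQrewrite : {t ∈ Set.Ioo (0:ℝ) 1 | ∃ j, Real.cos (a j * t) = 0} = ⋃ j, Qj j := by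
    ext t; simp only [hQj, Set.mem_setOf_eq, Set.mem_iUnion]; tauto
  have hdisj : ∀ i j, i ≠ j → Disjoint (Qj i) (Qj j) := by
    intro i j hij
    rw [Set.disjoint_left]
    rintro t ⟨ht, hci⟩ ⟨-, hcj⟩
    exact hij (hone t ⟨ht.1, ht.2.le⟩ hci hcj)
  have hfin : {t ∈ Set.Ioo (0:ℝ) 1 | ∃ j, Real.cos (a j * t) = 0}.Finite := by
    rw [hQrewrite]; exact Set.finite_iUnion hQjfin
  refine ⟨hfin, ?_⟩
  rw [hQrewrite, ncard_iUnion_disj Qj hQjfin hdisj]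
  refine Finset.sum_congr rfl fun j _ => ?_
  rw [hrep j, Set.ncard_image_of_injective _ (hinj j), Nat.card_coe_set_eq]

/-- Zero counting for `F(t) = Σ c_j tan(a_j t)` on `(0,1]`: if all `a_j, c_j > 0`,
`cos (a_j) ≠ 0` for all `j`, and for every `t ∈ (0,1]` at most one index has
`cos (a_j t) = 0`, then the zero set `Z` of `F` in `(0,1]` is finite and
`|Z| + 1 = P + χ`, where `P` is the number of poles of `F` in `(0,1)` and `χ = 1` iff
`F(1) ≥ 0`. -/

theorem stmt_13 (d : ℕ) (hd : 1 ≤ d) (a c : Fin d → ℝ)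
    (ha : ∀ j, 0 < a j) (hc : ∀ j, 0 < c j)
    (hcos1 : ∀ j, Real.cos (a j) ≠ 0)
    (hone : ∀ t ∈ Set.Ioc (0 : ℝ) 1, {j : Fin d | Real.cos (a j * t) = 0}.Subsingleton) :
    {t ∈ Set.Ioc (0 : ℝ) 1 |
        (∀ j, Real.cos (a j * t) ≠ 0) ∧ ∑ j, c j * Real.tan (a j * t) = 0}.Finite ∧
    {t ∈ Set.Ioc (0 : ℝ) 1 |
        (∀ j, Real.cos (a j * t) ≠ 0) ∧ ∑ j, c j * Real.tan (a j * t) = 0}.ncard + 1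
      = (∑ j, Nat.card {m : ℕ | (2 * (m : ℝ) + 1) * Real.pi / 2 < a j})
        + (if 0 ≤ ∑ j, c j * Real.tan (a j) then 1 else 0) := by
  classical
  haveI : NeZero d := ⟨by omega⟩
  set F : ℝ → ℝ := fun t => ∑ j, c j * Real.tan (a j * t) with hF
  set Q : Set ℝ := {t ∈ Set.Ioo (0:ℝ) 1 | ∃ j, Real.cos (a j * t) = 0} with hQdef
  obtain ⟨hQfin, hQcard⟩ := pole_count a ha hcos1 hone
  have hQsub : Q ⊆ Set.Ioo 0 1 := fun t ht => ht.1
  -- non-pole characterization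
  have hnp : ∀ t ∈ Set.Ioc (0:ℝ) 1, (t ∉ Q ↔ ∀ j, Real.cos (a j * t) ≠ 0) := by
    intro t ht
    rcases eq_or_lt_of_le ht.2 with h1 | h1
    · subst h1
      constructor
      · intro _ j
        simpa using hcos1 j
      · intro _ hmem
        exact absurd hmem.1.2 (lt_irrefl _)
    · constructor
      · intro h j hcj
        exact h ⟨⟨ht.1, h1⟩, j, hcj⟩
      · rintro h ⟨-, j, hcj⟩
        exact h j hcj
  -- derivative
  have hderiv : ∀ u, (∀ j, Real.cos (a j * u) ≠ 0) →
      HasDerivAt F (∑ j, c j * (1 / Real.cos (a j * u) ^ 2 * a j)) u := by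
    intro u hu
    apply HasDerivAt.fun_sum
    intro j _
    have h1 : HasDerivAt (fun t : ℝ => a j * t) (a j) u := by
      simpa using (hasDerivAt_id u).const_mul (a j)
    have h2 := Real.hasDerivAt_tan (hu j)
    exact (h2.comp u h1).const_mul (c j)
  have hderivpos : ∀ u, (∀ j, Real.cos (a j * u) ≠ 0) →
      0 < ∑ j, c j * (1 / Real.cos (a j * u) ^ 2 * a j) := by
    intro u hu
    apply Finset.sum_pos _ Finset.univ_nonempty
    intro j _
    have h3 : 0 < Real.cos (a j * u) ^ 2 := pow_two_pos_of_ne_zero (hu j)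
    exact mul_pos (hc j) (mul_pos (one_div_pos.mpr h3) (ha j))
  have hmono : ∀ s t, (0:ℝ) < s → s < t → t ≤ 1 → (∀ u ∈ Set.Icc s t, u ∉ Q) → F s < F t := by
    intro s t hs hst ht1 hni
    have hcosall : ∀ u ∈ Set.Icc s t, ∀ j, Real.cos (a j * u) ≠ 0 := fun u hu =>
      (hnp u ⟨lt_of_lt_of_le hs hu.1, le_trans hu.2 ht1⟩).mp (hni u hu)
    have hsm : StrictMonoOn F (Set.Icc s t) := by
      apply strictMonoOn_of_deriv_pos (convex_Icc s t)
      · intro u hu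
        exact (hderiv u (hcosall u hu)).continuousAt.continuousWithinAt
      · intro u hu
        rw [interior_Icc] at hu
        rw [(hderiv u (hcosall u (Set.Ioo_subset_Icc_self hu))).deriv]
        exact hderivpos u (hcosall u (Set.Ioo_subset_Icc_self hu))
    exact hsm ⟨le_rfl, hst.le⟩ ⟨hst.le, le_rfl⟩ hst
  have hcont : ∀ t ∈ Set.Ioc (0:ℝ) 1, t ∉ Q → ContinuousAt F t := fun t ht htQ =>
    (hderiv t ((hnp t ht).mp htQ)).continuousAt
  -- limits at poles
  have hpolelim : ∀ q ∈ Q, (∀ᶠ t in 𝓝[>] q, F t < 0) ∧ (∀ᶠ t in 𝓝[<] q, 0 < F t) := by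
    intro q hq
    obtain ⟨hqIoo, j0, hj0⟩ := hq
    have hqIoc : q ∈ Set.Ioc (0:ℝ) 1 := ⟨hqIoo.1, hqIoo.2.le⟩
    have huniq : ∀ j, Real.cos (a j * q) = 0 → j = j0 := fun j hj => hone q hqIoc hj hj0
    obtain ⟨k, hk⟩ := Real.cos_eq_zero_iff.mp hj0
    set G : ℝ → ℝ := fun t => ∑ j ∈ Finset.univ.erase j0, c j * Real.tan (a j * t) with hG
    have hsplit : ∀ t, F t = G t + c j0 * Real.tan (a j0 * t) := by
      intro t
      rw [hF, hG]
      simp only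
      rw [add_comm]
      exact (Finset.add_sum_erase Finset.univ (fun j => c j * Real.tan (a j * t))
        (Finset.mem_univ j0)).symm
    have hGcont : ContinuousAt G q := by
      have : HasDerivAt G (∑ j ∈ Finset.univ.erase j0,
          c j * (1 / Real.cos (a j * q) ^ 2 * a j)) q := by
        apply HasDerivAt.fun_sum
        intro j hj
        have hjne : j ≠ j0 := Finset.ne_of_mem_erase hj
        have hcj : Real.cos (a j * q) ≠ 0 := fun h => hjne (huniq j h)
        have h1 : HasDerivAt (fun t : ℝ => a j * t) (a j) q := by
          simpa using (hasDerivAt_id q).const_mul (a j)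
        exact ((Real.hasDerivAt_tan hcj).comp q h1).const_mul (c j)
      exact this.continuousAt
    have hmapR : Tendsto (fun t => a j0 * t) (𝓝[>] q) (𝓝[>] ((2*(k:ℝ)+1)*π/2)) := by
      rw [tendsto_nhdsWithin_iff]
      constructor
      · rw [← hk]
        exact ((continuous_mul_left (a j0)).tendsto q).mono_left nhdsWithin_le_nhds
      · filter_upwards [self_mem_nhdsWithin] with t ht
        rw [Set.mem_Ioi, ← hk]
        exact mul_lt_mul_of_pos_left ht (ha j0)
    have hmapL : Tendsto (fun t => a j0 * t) (𝓝[<] q) (𝓝[<] ((2*(k:ℝ)+1)*π/2)) := by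
      rw [tendsto_nhdsWithin_iff]
      constructor
      · rw [← hk]
        exact ((continuous_mul_left (a j0)).tendsto q).mono_left nhdsWithin_le_nhds
      · filter_upwards [self_mem_nhdsWithin] with t ht
        rw [Set.mem_Iio, ← hk]
        exact mul_lt_mul_of_pos_left ht (ha j0)
    have htendR : Tendsto F (𝓝[>] q) atBot := by
      have h1 : Tendsto (fun t => Real.tan (a j0 * t)) (𝓝[>] q) atBot :=
        (tan_atBot_right k).comp hmapR
      have h2 : Tendsto (fun t => c j0 * Real.tan (a j0 * t)) (𝓝[>] q) atBot :=
        (tendsto_const_mul_atBot_of_pos (hc j0)).mpr h1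
      have h3 := Filter.Tendsto.add_atBot
        (hGcont.tendsto.mono_left nhdsWithin_le_nhds) h2
      exact h3.congr fun t => (hsplit t).symm
    have htendL : Tendsto F (𝓝[<] q) atTop := by
      have h1 : Tendsto (fun t => Real.tan (a j0 * t)) (𝓝[<] q) atTop :=
        (tan_atTop_left k).comp hmapL
      have h2 : Tendsto (fun t => c j0 * Real.tan (a j0 * t)) (𝓝[<] q) atTop :=
        (tendsto_const_mul_atTop_of_pos (hc j0)).mpr h1
      have h3 := Filter.Tendsto.add_atTop
        (hGcont.tendsto.mono_left nhdsWithin_le_nhds) h2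
      exact h3.congr fun t => (hsplit t).symm
    exact ⟨htendR.eventually (eventually_lt_atBot 0),
      htendL.eventually (eventually_gt_atTop 0)⟩
  -- near zero: F > 0
  have hx : ∀ᶠ t in 𝓝[>] (0:ℝ), 0 < F t := by
    have h1 : ∀ j : Fin d, ∀ᶠ t in 𝓝[>] (0:ℝ), a j * t < π/2 := by
      intro j
      have h2 : Tendsto (fun t : ℝ => a j * t) (𝓝[>] 0) (𝓝 0) := by
        have := ((continuous_mul_left (a j)).tendsto 0).mono_left
          (nhdsWithin_le_nhds (s := Set.Ioi (0:ℝ)))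
        simpa using this
      exact h2.eventually_lt_const (by positivity)
    have hall : ∀ᶠ t in 𝓝[>] (0:ℝ), ∀ j, a j * t < π/2 := eventually_all.mpr h1
    filter_upwards [hall, self_mem_nhdsWithin] with t hat ht
    have ht0 : 0 < t := ht
    apply Finset.sum_pos _ Finset.univ_nonempty
    intro j _
    exact mul_pos (hc j) (Real.tan_pos_of_pos_of_lt_pi_div_two (mul_pos (ha j) ht0) (hat j))
  obtain ⟨hfin, hcard⟩ := key_count Q.ncard F 0 1 Q one_pos hQfin rfl hQsub hmono hcont
    (fun q hq => (hpolelim q hq).1) (fun q hq => (hpolelim q hq).2) hx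
  have hZeq : {t ∈ Set.Ioc (0:ℝ) 1 | (∀ j, Real.cos (a j * t) ≠ 0) ∧ F t = 0}
      = {t ∈ Set.Ioc (0:ℝ) 1 | t ∉ Q ∧ F t = 0} := by
    ext t
    simp only [Set.mem_setOf_eq]
    constructor
    · rintro ⟨ht, hcos, hFt⟩
      exact ⟨ht, (hnp t ht).mpr hcos, hFt⟩
    · rintro ⟨ht, htQ, hFt⟩
      exact ⟨ht, (hnp t ht).mp htQ, hFt⟩
  have hF1 : F 1 = ∑ j, c j * Real.tan (a j) := by
    rw [hF]; simp
  rw [← hF1]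
  constructor
  · rw [show {t ∈ Set.Ioc (0:ℝ) 1 |
        (∀ j, Real.cos (a j * t) ≠ 0) ∧ ∑ j, c j * Real.tan (a j * t) = 0} =
        {t ∈ Set.Ioc (0:ℝ) 1 | (∀ j, Real.cos (a j * t) ≠ 0) ∧ F t = 0} from rfl, hZeq]
    exact hfin
  · rw [show {t ∈ Set.Ioc (0:ℝ) 1 |
        (∀ j, Real.cos (a j * t) ≠ 0) ∧ ∑ j, c j * Real.tan (a j * t) = 0} =
        {t ∈ Set.Ioc (0:ℝ) 1 | (∀ j, Real.cos (a j * t) ≠ 0) ∧ F t = 0} from rfl, hZeq]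
    rw [hcard, hQcard]
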